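/- Let ρ₀ = (1/2)·diag(1+u, 1−u) with 0 ≤ u ≤ 1, and σ₀ = (1/2)·[[1+z, x−iy],[x+iy, 1−z]] a 2×2 density matrix. Then inf over λ ∈ [0,1] of (1/2)·‖ Φ_λ(ρ₀) − σ₀ ‖₁, where Φ_λ(X) = (1−λ)(tr X)/2 · I + λ X, equals (1/2)√((z−u)²+x²+y²) if z ≥ u, equals (1/2)√(x²+y²) if 0 ≤ z ≤ u, and equals (1/2)√(z²+x²+y²) if z ≤ 0. -/

import Mathlib

open Matrix Complex ComplexOrder

/-- Trace norm (sum of singular values) of a complex square matrix. -/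
noncomputable def traceNorm {n : ℕ} (A : Matrix (Fin n) (Fin n) ℂ) : ℝ :=
  ∑ i, Real.sqrt ((Matrix.posSemidef_conjTranspose_mul_self A).1.eigenvalues i)

/-- The qubit depolarizing channel `Φ_λ(X) = (1−λ)(tr X)/2 · I + λ X`. -/
noncomputable def depol (l : ℝ) (X : Matrix (Fin 2) (Fin 2) ℂ) :
    Matrix (Fin 2) (Fin 2) ℂ :=
  (((1 - l : ℝ) : ℂ) * X.trace / 2) • (1 : Matrix (Fin 2) (Fin 2) ℂ) + (l : ℂ) • X

lemma eig_smul_one {n : ℕ} (c : ℝ)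
    (hA : Matrix.IsHermitian ((c:ℂ) • (1 : Matrix (Fin n) (Fin n) ℂ))) (i : Fin n) :
    hA.eigenvalues i = c := by
  rw [Matrix.IsHermitian.eigenvalues_eq]
  simp only [smul_mulVec, one_mulVec, dotProduct_smul,
    ← EuclideanSpace.inner_eq_star_dotProduct,
    inner_self_eq_norm_sq_to_K, hA.eigenvectorBasis.orthonormal.1 i]
  rw [dotProduct_comm, ← EuclideanSpace.inner_eq_star_dotProduct,
    inner_self_eq_norm_sq_to_K, hA.eigenvectorBasis.orthonormal.1 i]
  simp

lemma eig_of_eq {n : ℕ} {A : Matrix (Fin n) (Fin n) ℂ} (hA : A.IsHermitian) (c : ℝ)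
    (h : A = (c:ℂ) • 1) (i : Fin n) : hA.eigenvalues i = c := by
  subst h; exact eig_smul_one c hA i

lemma traceNorm_of (A : Matrix (Fin 2) (Fin 2) ℂ) (c : ℝ)
    (h : Aᴴ * A = (c:ℂ) • 1) : traceNorm A = 2 * Real.sqrt c := by
  unfold traceNorm
  rw [Fin.sum_univ_two, eig_of_eq _ c h, eig_of_eq _ c h]
  ring

lemma key_mat (l u x y z : ℝ) :
    (depol l ((1 / 2 : ℂ) • !![1 + (u : ℂ), 0; 0, 1 - (u : ℂ)]) -
      (1 / 2 : ℂ) • !![1 + (z : ℂ), (x : ℂ) - Complex.I * (y : ℂ);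
        (x : ℂ) + Complex.I * (y : ℂ), 1 - (z : ℂ)])ᴴ *
    (depol l ((1 / 2 : ℂ) • !![1 + (u : ℂ), 0; 0, 1 - (u : ℂ)]) -
      (1 / 2 : ℂ) • !![1 + (z : ℂ), (x : ℂ) - Complex.I * (y : ℂ);
        (x : ℂ) + Complex.I * (y : ℂ), 1 - (z : ℂ)]) =
    ((((l * u - z) ^ 2 + x ^ 2 + y ^ 2) / 4 : ℝ) : ℂ) • 1 := by
  ext i j
  fin_cases i <;> fin_cases j <;>
    simp [depol, Matrix.mul_apply, Fin.sum_univ_two, Matrix.trace_fin_two,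
      Matrix.one_apply, Complex.ext_iff] <;>
    push_cast <;> ring_nf <;> norm_num [Complex.ext_iff, pow_two] <;> ring

theorem depolarizing_approx (u x y z : ℝ) (hu0 : 0 ≤ u) (hu1 : u ≤ 1)
    (hσ : x ^ 2 + y ^ 2 + z ^ 2 ≤ 1)
    (ρ₀ σ₀ : Matrix (Fin 2) (Fin 2) ℂ)
    (hρ₀ : ρ₀ = (1 / 2 : ℂ) • !![1 + (u : ℂ), 0; 0, 1 - (u : ℂ)])
    (hσ₀ : σ₀ = (1 / 2 : ℂ) • !![1 + (z : ℂ), (x : ℂ) - Complex.I * (y : ℂ);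
        (x : ℂ) + Complex.I * (y : ℂ), 1 - (z : ℂ)]) :
    ((z ≥ u → sInf ((fun l => (1 / 2) * traceNorm (depol l ρ₀ - σ₀)) '' Set.Icc 0 1)
        = (1 / 2) * Real.sqrt ((z - u) ^ 2 + x ^ 2 + y ^ 2)) ∧
      (0 ≤ z → z ≤ u → sInf ((fun l => (1 / 2) * traceNorm (depol l ρ₀ - σ₀)) '' Set.Icc 0 1)
        = (1 / 2) * Real.sqrt (x ^ 2 + y ^ 2)) ∧
      (z ≤ 0 → sInf ((fun l => (1 / 2) * traceNorm (depol l ρ₀ - σ₀)) '' Set.Icc 0 1)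
        = (1 / 2) * Real.sqrt (z ^ 2 + x ^ 2 + y ^ 2))) := by
  subst hρ₀ hσ₀
  -- the value of the objective at each `l`
  have hval : ∀ l : ℝ, (1 / 2 : ℝ) * traceNorm (depol l ((1 / 2 : ℂ) •
      !![1 + (u : ℂ), 0; 0, 1 - (u : ℂ)]) - (1 / 2 : ℂ) •
      !![1 + (z : ℂ), (x : ℂ) - Complex.I * (y : ℂ);
        (x : ℂ) + Complex.I * (y : ℂ), 1 - (z : ℂ)])
      = (1 / 2) * Real.sqrt ((l * u - z) ^ 2 + x ^ 2 + y ^ 2) := by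
    intro l
    rw [traceNorm_of _ _ (key_mat l u x y z)]
    rw [show ((l * u - z) ^ 2 + x ^ 2 + y ^ 2) / 4
        = ((l * u - z) ^ 2 + x ^ 2 + y ^ 2) / 2 ^ 2 by ring,
      Real.sqrt_div (by positivity), Real.sqrt_sq (by norm_num : (0:ℝ) ≤ 2)]
    ring
  simp only [hval]
  set g : ℝ → ℝ := fun l => (1 / 2) * Real.sqrt ((l * u - z) ^ 2 + x ^ 2 + y ^ 2) with hg
  have hbdd : BddBelow (g '' Set.Icc 0 1) := by
    refine ⟨0, ?_⟩
    rintro _ ⟨l, -, rfl⟩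
    positivity
  have hne : (g '' Set.Icc 0 1).Nonempty :=
    Set.Nonempty.image _ ⟨0, by norm_num⟩
  refine ⟨?_, ?_, ?_⟩
  · intro hz
    apply le_antisymm
    · refine csInf_le hbdd ⟨1, ⟨zero_le_one, le_refl 1⟩, ?_⟩
      rw [hg]
      simp only
      rw [show (1 * u - z) ^ 2 = (z - u) ^ 2 by ring]
    · refine le_csInf hne ?_
      rintro b ⟨l, ⟨hl0, hl1⟩, rfl⟩
      have h1 : l * u ≤ u := mul_le_of_le_one_left hu0 hl1
      have h2 : (z - u) ^ 2 ≤ (l * u - z) ^ 2 := by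
        nlinarith [mul_nonneg (mul_nonneg hu0 (by linarith : (0:ℝ) ≤ 1 - l))
          (by linarith : (0:ℝ) ≤ 2 * z - u - l * u)]
      simp only [hg]
      exact mul_le_mul_of_nonneg_left (Real.sqrt_le_sqrt (by linarith)) (by norm_num)
  · intro hz0 hzu
    apply le_antisymm
    · rcases hu0.eq_or_lt with hu | hu
      · have hz : z = 0 := le_antisymm (by linarith [hzu, hu]) hz0
        refine csInf_le hbdd ⟨0, ⟨le_refl 0, zero_le_one⟩, ?_⟩
        rw [hg]; simp only
        rw [hz]; norm_num
      · refine csInf_le hbdd ⟨z / u, ⟨div_nonneg hz0 hu0, (div_le_one hu).2 hzu⟩, ?_⟩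
        rw [hg]; simp only
        rw [div_mul_cancel₀ _ (ne_of_gt hu)]
        norm_num
    · refine le_csInf hne ?_
      rintro b ⟨l, ⟨hl0, hl1⟩, rfl⟩
      have h2 : x ^ 2 + y ^ 2 ≤ (l * u - z) ^ 2 + x ^ 2 + y ^ 2 := by
        nlinarith [sq_nonneg (l * u - z)]
      simp only [hg]
      exact mul_le_mul_of_nonneg_left (Real.sqrt_le_sqrt h2) (by norm_num)
  · intro hz
    apply le_antisymm
    · refine csInf_le hbdd ⟨0, ⟨le_refl 0, zero_le_one⟩, ?_⟩
      rw [hg]; simp only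
      rw [show (0 * u - z) ^ 2 = z ^ 2 by ring]
    · refine le_csInf hne ?_
      rintro b ⟨l, ⟨hl0, hl1⟩, rfl⟩
      have h2 : z ^ 2 ≤ (l * u - z) ^ 2 := by
        nlinarith [mul_nonneg (mul_nonneg hl0 hu0) (by linarith [mul_nonneg hl0 hu0] : (0:ℝ) ≤ l * u - 2 * z)]
      simp only [hg]
      exact mul_le_mul_of_nonneg_left (Real.sqrt_le_sqrt (by linarith)) (by norm_num)
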